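/- Let q be a power of an odd prime and let G = 1 + 𝔤 be a pattern subgroup of UT_n(F_{q^k}), regarded over F_q, with † an involutive F_q-algebra antiautomorphism of 𝔤 satisfying (α e_ij)† ∈ F_{q^k}^× e_{j̄ ī} for all α ∈ F_{q^k}^×. Let 𝔥 = {x ∈ 𝔤 | x_ij = 0 if j ≤ n/2}, and for λ ∈ 𝔤* let 𝔤_λ = {x ∈ 𝔤 | λ(yx) = 0 for all y ∈ 𝔥 and λ(xy) = 0 for all y ∈ 𝔥†} and G_λ = 1 + 𝔤_λ. Let f be a Springer morphism. Then (a) the map G_λ → ℂ^×, g ↦ θ(λ(f(g))), is a group homomorphism (a linear character of G_λ); and (b) this map is independent of the choice of Springer morphism: for any two Springer morphisms f and f′, θ(λ(f(g))) = θ(λ(f′(g))) for all g ∈ G_λ. -/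

import Mathlib

open Matrix

section PatternGroups

variable (F : Type) [Field F] (E : Type) [Field E] [Algebra F E] {n : ℕ}

/-- The pattern subalgebra `𝔤 ⊆ 𝔲𝔱_n(E)` of matrices supported on the set `S` of strict
relations `i ≺ j` of a subposet of the usual linear order on `[n]`. -/
def patAlg (S : Set (Fin n × Fin n)) : Set (Matrix (Fin n) (Fin n) E) :=
  {x | ∀ i j : Fin n, (i, j) ∉ S → x i j = 0}

/-- The pattern subgroup `G = 1 + 𝔤`. -/
def patGrp (S : Set (Fin n × Fin n)) : Set (Matrix (Fin n) (Fin n) E) :=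
  {g | ∃ x ∈ patAlg E S, g = 1 + x}

/-- The two-sided ideal `𝔥 = {x ∈ 𝔤 | x_{ij} = 0 if j ≤ n/2}` (indices read 1-based). -/
def patHAlg (S : Set (Fin n × Fin n)) : Set (Matrix (Fin n) (Fin n) E) :=
  {x | x ∈ patAlg E S ∧ ∀ i j : Fin n, (j : ℕ) + 1 ≤ n / 2 → x i j = 0}

/-- The normal subgroup `H = 1 + 𝔥` of `G`. -/
def patHGrp (S : Set (Fin n × Fin n)) : Set (Matrix (Fin n) (Fin n) E) :=
  {g | ∃ x ∈ patHAlg E S, g = 1 + x}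

/-- The extension of `†` from `𝔤` to `G = 1 + 𝔤`: `(1+x)† = 1 + x†`. -/
def dagGrp (dag : Matrix (Fin n) (Fin n) E → Matrix (Fin n) (Fin n) E)
    (g : Matrix (Fin n) (Fin n) E) : Matrix (Fin n) (Fin n) E :=
  1 + dag (g - 1)

/-- The subgroup `U = {u ∈ G | u† = u⁻¹}` of the pattern group `G`. -/
def patUGrp (S : Set (Fin n × Fin n))
    (dag : Matrix (Fin n) (Fin n) E → Matrix (Fin n) (Fin n) E) :
    Set (Matrix (Fin n) (Fin n) E) :=
  {u | u ∈ patGrp E S ∧ u * dagGrp E dag u = 1 ∧ dagGrp E dag u * u = 1}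

/-- The set `𝔲 = {x ∈ 𝔤 | x† = -x}`. -/
def patUAlg (S : Set (Fin n × Fin n))
    (dag : Matrix (Fin n) (Fin n) E → Matrix (Fin n) (Fin n) E) :
    Set (Matrix (Fin n) (Fin n) E) :=
  {x | x ∈ patAlg E S ∧ dag x = -x}

/-- `†` is an involutive `F`-algebra antiautomorphism of the pattern algebra `𝔤` sending
each `α e_{ij}` (`α ∈ E^×`) into `E^× e_{\bar j \bar i}`, where `\bar i = n + 1 - i`. -/
structure IsPatternAntiInvolution (S : Set (Fin n × Fin n))
    (dag : Matrix (Fin n) (Fin n) E → Matrix (Fin n) (Fin n) E) : Prop where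
  map_mem : ∀ x ∈ patAlg E S, dag x ∈ patAlg E S
  map_add : ∀ x ∈ patAlg E S, ∀ y ∈ patAlg E S, dag (x + y) = dag x + dag y
  map_smul : ∀ (c : F), ∀ x ∈ patAlg E S,
    dag (algebraMap F E c • x) = algebraMap F E c • dag x
  map_mul : ∀ x ∈ patAlg E S, ∀ y ∈ patAlg E S, dag (x * y) = dag y * dag x
  invol : ∀ x ∈ patAlg E S, dag (dag x) = x
  elementary : ∀ i j : Fin n, (i, j) ∈ S → ∀ α : E, α ≠ 0 →
    ∃ β : E, β ≠ 0 ∧ dag (Matrix.single i j α) = Matrix.single j.rev i.rev β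

/-- A Springer morphism: a bijection `f : G → 𝔤` with `f(U) = 𝔲` and
`f(1+x) = x + Σ_{i ≥ 2} a_i x^i` with coefficients `a_i ∈ F`. -/
def IsSpringerMorphism (S : Set (Fin n × Fin n))
    (dag f : Matrix (Fin n) (Fin n) E → Matrix (Fin n) (Fin n) E) : Prop :=
  Set.BijOn f (patGrp E S) (patAlg E S) ∧
  f '' patUGrp E S dag = patUAlg E S dag ∧
  ∃ (N : ℕ) (a : ℕ → F), a 1 = 1 ∧
    ∀ x ∈ patAlg E S, f (1 + x) = ∑ i ∈ Finset.Ico 1 N, algebraMap F E (a i) • x ^ i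

/-- The orbit `G · w = {g w g† | g ∈ G}` of `w` under the action `g · x = g x g†`. -/
def patGrpDot (S : Set (Fin n × Fin n))
    (dag : Matrix (Fin n) (Fin n) E → Matrix (Fin n) (Fin n) E)
    (w : Matrix (Fin n) (Fin n) E) : Set (Matrix (Fin n) (Fin n) E) :=
  {z | ∃ g ∈ patGrp E S, z = g * w * dagGrp E dag g}

end PatternGroups

section Supercharacters

variable (F : Type) [Field F] (E : Type) [Field E] [Algebra F E] {n : ℕ}

/-- The orbit of `λ ∈ 𝔲*` under a subset `T ⊆ G` (for `T = G` or `T = H`), acting by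
`(g·λ)(x) = λ(g⁻¹ · x) = λ(g⁻¹ x (g⁻¹)†)`.  An element `λ ∈ 𝔲*` is recorded as a function
`𝔲 → F` (here represented via a functional `lam` on the full matrix space: only its values
on `𝔲` matter). -/
def patDualOrbit (S : Set (Fin n × Fin n))
    (dag : Matrix (Fin n) (Fin n) E → Matrix (Fin n) (Fin n) E)
    (T : Set (Matrix (Fin n) (Fin n) E))
    (lam : Module.Dual F (Matrix (Fin n) (Fin n) E)) :
    Set (↥(patUAlg E S dag) → F) :=
  {ψ | ∃ g ∈ T, ∀ x : ↥(patUAlg E S dag),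
    ψ x = lam (g⁻¹ * (x : Matrix (Fin n) (Fin n) E) * dagGrp E dag g⁻¹)}

/-- The supercharacter `χ_λ = (|H·λ|/|G·λ|) Σ_{μ ∈ G·λ} θ ∘ μ ∘ f` of `U`, for `λ ∈ 𝔲*`. -/
noncomputable def patSupchar (S : Set (Fin n × Fin n))
    (dag f : Matrix (Fin n) (Fin n) E → Matrix (Fin n) (Fin n) E)
    (θ : AddChar F ℂ) (lam : Module.Dual F (Matrix (Fin n) (Fin n) E))
    (u : Matrix (Fin n) (Fin n) E) : ℂ :=
  (Nat.card (patDualOrbit F E S dag (patHGrp E S) lam) : ℂ) /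
    (Nat.card (patDualOrbit F E S dag (patGrp E S) lam) : ℂ) *
    ∑ᶠ ψ ∈ patDualOrbit F E S dag (patGrp E S) lam,
      @dite ℂ (f u ∈ patUAlg E S dag) (Classical.propDecidable _)
        (fun h => θ (ψ ⟨f u, h⟩)) (fun _ => 0)

/-- The superclass `K_u = {v ∈ U | f(v) ∈ G · f(u)}` of `u`, as a subset of the ambient
matrix space. -/
def patSupclass (S : Set (Fin n × Fin n))
    (dag f : Matrix (Fin n) (Fin n) E → Matrix (Fin n) (Fin n) E)
    (u : Matrix (Fin n) (Fin n) E) : Set (Matrix (Fin n) (Fin n) E) :=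
  {v | v ∈ patUGrp E S dag ∧ f v ∈ patGrpDot E S dag (f u)}

end Supercharacters

section AuxLemmas

variable {F : Type} [Field F] {E : Type} [Field E] [Algebra F E] {n : ℕ}
  {S : Set (Fin n × Fin n)}

lemma patAlg_zero : (0 : Matrix (Fin n) (Fin n) E) ∈ patAlg E S := by
  intro i j _; rfl

lemma patAlg_add {x y : Matrix (Fin n) (Fin n) E}
    (hx : x ∈ patAlg E S) (hy : y ∈ patAlg E S) : x + y ∈ patAlg E S := by
  intro i j h
  simp [Matrix.add_apply, hx i j h, hy i j h]

lemma patAlg_sum {ι : Type*} (s : Finset ι) (g : ι → Matrix (Fin n) (Fin n) E)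
    (hg : ∀ i ∈ s, g i ∈ patAlg E S) : (∑ i ∈ s, g i) ∈ patAlg E S := by
  classical
  induction s using Finset.induction_on with
  | empty => simpa using patAlg_zero
  | insert a s' hni ih =>
    rw [Finset.sum_insert hni]
    exact patAlg_add (hg a (Finset.mem_insert_self a s'))
      (ih fun i hi => hg i (Finset.mem_insert_of_mem hi))

lemma patAlg_mul (hS2 : ∀ i j k : Fin n, (i, j) ∈ S → (j, k) ∈ S → (i, k) ∈ S)
    {x y : Matrix (Fin n) (Fin n) E}
    (hx : x ∈ patAlg E S) (hy : y ∈ patAlg E S) : x * y ∈ patAlg E S := by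
  intro i k h
  rw [Matrix.mul_apply]
  refine Finset.sum_eq_zero fun j _ => ?_
  by_cases hij : (i, j) ∈ S
  · by_cases hjk : (j, k) ∈ S
    · exact absurd (hS2 i j k hij hjk) h
    · simp [hy j k hjk]
  · simp [hx i j hij]

lemma patHAlg_zero : (0 : Matrix (Fin n) (Fin n) E) ∈ patHAlg E S :=
  ⟨patAlg_zero, fun _ _ _ => rfl⟩

lemma patHAlg_add {x y : Matrix (Fin n) (Fin n) E}
    (hx : x ∈ patHAlg E S) (hy : y ∈ patHAlg E S) : x + y ∈ patHAlg E S := by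
  refine ⟨patAlg_add hx.1 hy.1, fun i j h => ?_⟩
  simp [Matrix.add_apply, hx.2 i j h, hy.2 i j h]

lemma patHAlg_sum {ι : Type*} (s : Finset ι) (g : ι → Matrix (Fin n) (Fin n) E)
    (hg : ∀ i ∈ s, g i ∈ patHAlg E S) : (∑ i ∈ s, g i) ∈ patHAlg E S := by
  classical
  induction s using Finset.induction_on with
  | empty => simpa using patHAlg_zero
  | insert a s' hni ih =>
    rw [Finset.sum_insert hni]
    exact patHAlg_add (hg a (Finset.mem_insert_self a s'))
      (ih fun i hi => hg i (Finset.mem_insert_of_mem hi))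

/-- `𝔥 · 𝔤 ⊆ 𝔥`. -/
lemma patHAlg_mul_patAlg (hS1 : ∀ p ∈ S, p.1 < p.2)
    (hS2 : ∀ i j k : Fin n, (i, j) ∈ S → (j, k) ∈ S → (i, k) ∈ S)
    {y z : Matrix (Fin n) (Fin n) E}
    (hy : y ∈ patHAlg E S) (hz : z ∈ patAlg E S) : y * z ∈ patHAlg E S := by
  refine ⟨patAlg_mul hS2 hy.1 hz, fun i k hk => ?_⟩
  rw [Matrix.mul_apply]
  refine Finset.sum_eq_zero fun j _ => ?_
  by_cases hjk : (j, k) ∈ S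
  · have hlt : (j : ℕ) < (k : ℕ) := hS1 (j, k) hjk
    have : (j : ℕ) + 1 ≤ n / 2 := by omega
    simp [hy.2 i j this]
  · simp [hz j k hjk]

lemma dag_zero (hdag : IsPatternAntiInvolution F E S dag) :
    dag (0 : Matrix (Fin n) (Fin n) E) = 0 := by
  have h := hdag.map_add 0 patAlg_zero 0 patAlg_zero
  simp only [add_zero] at h
  exact (left_eq_add.mp h)

lemma dag_sum (hdag : IsPatternAntiInvolution F E S dag)
    {ι : Type*} (s : Finset ι) (g : ι → Matrix (Fin n) (Fin n) E)
    (hg : ∀ i ∈ s, g i ∈ patAlg E S) :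
    dag (∑ i ∈ s, g i) = ∑ i ∈ s, dag (g i) := by
  classical
  induction s using Finset.induction_on with
  | empty => simpa using dag_zero hdag
  | insert a s' hni ih =>
    rw [Finset.sum_insert hni, Finset.sum_insert hni,
      hdag.map_add _ (hg a (Finset.mem_insert_self a s')) _
        (patAlg_sum s' g fun i hi => hg i (Finset.mem_insert_of_mem hi)),
      ih fun i hi => hg i (Finset.mem_insert_of_mem hi)]

lemma stdBasisMatrix_mem_patAlg {i j : Fin n} {α : E}
    (h : α ≠ 0 → (i, j) ∈ S) : Matrix.single i j α ∈ patAlg E S := by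
  intro i' j' h'
  by_cases hα : α = 0
  · simp [hα, Matrix.single]
  · have : ¬(i = i' ∧ j = j') := by
      rintro ⟨rfl, rfl⟩; exact h' (h hα)
    simp [Matrix.single, this]

/-- If `x ∈ 𝔤` is supported on rows `i < n - n/2`, then `x† ∈ 𝔥`. -/
lemma dag_mem_patHAlg (hdag : IsPatternAntiInvolution F E S dag)
    {x : Matrix (Fin n) (Fin n) E} (hx : x ∈ patAlg E S)
    (hrow : ∀ i j : Fin n, x i j ≠ 0 → (i : ℕ) < n - n / 2) :
    dag x ∈ patHAlg E S := by
  classical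
  have hterm : ∀ i j : Fin n, Matrix.single i j (x i j) ∈ patAlg E S :=
    fun i j => stdBasisMatrix_mem_patAlg fun hne => by
      by_contra hS
      exact hne (hx i j hS)
  have hrewrite : dag x = ∑ i : Fin n, ∑ j : Fin n,
      dag (Matrix.single i j (x i j)) := by
    conv_lhs => rw [Matrix.matrix_eq_sum_single x]
    rw [dag_sum hdag _ _ (fun i _ => patAlg_sum _ _ fun j _ => hterm i j)]
    exact Finset.sum_congr rfl fun i _ =>
      dag_sum hdag _ _ fun j _ => hterm i j
  rw [hrewrite]
  refine patHAlg_sum _ _ fun i _ => patHAlg_sum _ _ fun j _ => ?_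
  by_cases hij : x i j = 0
  · rw [hij, Matrix.single_zero, dag_zero hdag]
    exact patHAlg_zero
  · have hmemS : (i, j) ∈ S := by
      by_contra hS; exact hij (hx i j hS)
    obtain ⟨β, hβ, hform⟩ := hdag.elementary i j hmemS (x i j) hij
    rw [hform]
    refine ⟨?_, fun i' j' hj' => ?_⟩
    · have := hdag.map_mem _ (hterm i j)
      rwa [hform] at this
    · -- column of the reflected entry is `i.rev`, with value `≥ n/2`
      have hi : (i : ℕ) < n - n / 2 := hrow i j hij
      have hin : (i : ℕ) < n := i.isLt
      by_cases he : j.rev = i' ∧ i.rev = j'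
      · exfalso
        have hj2 : (j' : ℕ) = n - ((i : ℕ) + 1) := by
          rw [← he.2, Fin.val_rev]
        omega
      · simp [Matrix.single, he]

/-- The key vanishing lemma: `λ(ab) = 0` for `a, b` satisfying the `𝔤_λ` conditions. -/
lemma key_vanish (hS1 : ∀ p ∈ S, p.1 < p.2)
    (hS2 : ∀ i j k : Fin n, (i, j) ∈ S → (j, k) ∈ S → (i, k) ∈ S)
    (hdag : IsPatternAntiInvolution F E S dag)
    (lam : Module.Dual F (Matrix (Fin n) (Fin n) E))
    {a b : Matrix (Fin n) (Fin n) E}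
    (ha : a ∈ patAlg E S) (ha2 : ∀ y ∈ patHAlg E S, lam (a * dag y) = 0)
    (hb : b ∈ patAlg E S) (hb1 : ∀ y ∈ patHAlg E S, lam (y * b) = 0) :
    lam (a * b) = 0 := by
  classical
  set a₁ : Matrix (Fin n) (Fin n) E :=
    Matrix.of fun i j => if n / 2 ≤ (j : ℕ) then a i j else 0 with ha₁def
  set bd : Matrix (Fin n) (Fin n) E :=
    Matrix.of fun i j => if (i : ℕ) < n / 2 then b i j else 0 with hbddef
  have ha₁mem : a₁ ∈ patHAlg E S := by
    refine ⟨fun i j h => ?_, fun i j h => ?_⟩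
    · simp [ha₁def, ha i j h]
    · simp only [ha₁def, Matrix.of_apply]
      rw [if_neg]; omega
  have hbdmem : bd ∈ patAlg E S := by
    intro i j h
    simp [hbddef, hb i j h]
  have hbdrow : ∀ i j : Fin n, bd i j ≠ 0 → (i : ℕ) < n - n / 2 := by
    intro i j hne
    simp only [hbddef, Matrix.of_apply] at hne
    by_cases h : (i : ℕ) < n / 2
    · have hin : (i : ℕ) < n := i.isLt
      omega
    · simp [h] at hne
  -- structural zero: a₁ * (b - bd) is the only part of a₁*b, i.e. a₁ * bd = 0
  have hstruct1 : a₁ * bd = 0 := by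
    ext i k
    rw [Matrix.mul_apply]
    refine Finset.sum_eq_zero fun j _ => ?_
    by_cases h : n / 2 ≤ (j : ℕ)
    · have : bd j k = 0 := by
        simp only [hbddef, Matrix.of_apply]; rw [if_neg]; omega
      simp [this]
    · have : a₁ i j = 0 := by simp [ha₁def, h]
      simp [this]
  -- structural zero: (a - a₁) * (b - bd) = 0
  have hstruct2 : (a - a₁) * (b - bd) = 0 := by
    ext i k
    rw [Matrix.mul_apply]
    refine Finset.sum_eq_zero fun j _ => ?_
    by_cases h : n / 2 ≤ (j : ℕ)
    · have : (a - a₁) i j = 0 := by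
        simp [Matrix.sub_apply, ha₁def, h]
      simp [this]
    · have : (b - bd) j k = 0 := by
        simp only [Matrix.sub_apply, hbddef, Matrix.of_apply]
        rw [if_pos (by omega)]; ring
      simp [this]
  -- lam (a * bd) = 0 via the right condition on a
  have hl1 : lam (a * bd) = 0 := by
    have hmem := dag_mem_patHAlg hdag hbdmem hbdrow
    have := ha2 (dag bd) hmem
    rwa [hdag.invol bd hbdmem] at this
  -- lam (a₁ * b) = 0 via the left condition on b
  have hl2 : lam (a₁ * b) = 0 := hb1 a₁ ha₁mem
  -- assemble: a*b = a₁*b + a*bd - a₁*bd - (a-a₁)*(b-bd) ... expand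
  have hexpand : a * b = a₁ * b + a * bd - a₁ * bd + (a - a₁) * (b - bd) := by
    noncomm_ring
  rw [hexpand, hstruct1, hstruct2]
  simp only [sub_zero, add_zero, map_add, hl1, hl2, add_zero, zero_add, map_zero]

end AuxLemmas

section MainAux

variable {F : Type} [Field F] {E : Type} [Field E] [Algebra F E] {n : ℕ}
  {S : Set (Fin n × Fin n)} {dag : Matrix (Fin n) (Fin n) E → Matrix (Fin n) (Fin n) E}

/-- The `𝔤_λ` conditions are preserved under multiplication. -/
lemma glam_mul (hS1 : ∀ p ∈ S, p.1 < p.2)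
    (hS2 : ∀ i j k : Fin n, (i, j) ∈ S → (j, k) ∈ S → (i, k) ∈ S)
    (hdag : IsPatternAntiInvolution F E S dag)
    (lam : Module.Dual F (Matrix (Fin n) (Fin n) E))
    {x z : Matrix (Fin n) (Fin n) E}
    (hx : x ∈ patAlg E S)
    (hx2 : ∀ y ∈ patHAlg E S, lam (x * dag y) = 0)
    (hz : z ∈ patAlg E S)
    (hz1 : ∀ y ∈ patHAlg E S, lam (y * z) = 0) :
    x * z ∈ patAlg E S ∧ (∀ y ∈ patHAlg E S, lam (y * (x * z)) = 0) ∧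
      (∀ y ∈ patHAlg E S, lam ((x * z) * dag y) = 0) := by
  refine ⟨patAlg_mul hS2 hx hz, fun y hy => ?_, fun y hy => ?_⟩
  · rw [← mul_assoc]
    exact hz1 (y * x) (patHAlg_mul_patAlg hS1 hS2 hy hx)
  · have hyz : y * dag z ∈ patHAlg E S :=
      patHAlg_mul_patAlg hS1 hS2 hy (hdag.map_mem z hz)
    have hkey : dag (y * dag z) = z * dag y := by
      rw [hdag.map_mul y hy.1 (dag z) (hdag.map_mem z hz), hdag.invol z hz]
    have := hx2 (y * dag z) hyz
    rwa [hkey, ← mul_assoc] at this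

/-- Powers of elements of `𝔤_λ` stay in `𝔤_λ`. -/
lemma glam_pow (hS1 : ∀ p ∈ S, p.1 < p.2)
    (hS2 : ∀ i j k : Fin n, (i, j) ∈ S → (j, k) ∈ S → (i, k) ∈ S)
    (hdag : IsPatternAntiInvolution F E S dag)
    (lam : Module.Dual F (Matrix (Fin n) (Fin n) E))
    {x : Matrix (Fin n) (Fin n) E}
    (hx : x ∈ patAlg E S)
    (hx1 : ∀ y ∈ patHAlg E S, lam (y * x) = 0)
    (hx2 : ∀ y ∈ patHAlg E S, lam (x * dag y) = 0) :
    ∀ i : ℕ, 1 ≤ i → x ^ i ∈ patAlg E S ∧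
      (∀ y ∈ patHAlg E S, lam (y * x ^ i) = 0) ∧
      (∀ y ∈ patHAlg E S, lam (x ^ i * dag y) = 0) := by
  intro i hi
  induction i, hi using Nat.le_induction with
  | base => rw [pow_one]; exact ⟨hx, hx1, hx2⟩
  | succ i hi ih =>
    rw [pow_succ]
    exact glam_mul hS1 hS2 hdag lam ih.1 ih.2.2 hx hx1

/-- `λ(x^i) = 0` for `x ∈ 𝔤_λ` and `i ≥ 2`. -/
lemma lam_pow_eq_zero (hS1 : ∀ p ∈ S, p.1 < p.2)
    (hS2 : ∀ i j k : Fin n, (i, j) ∈ S → (j, k) ∈ S → (i, k) ∈ S)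
    (hdag : IsPatternAntiInvolution F E S dag)
    (lam : Module.Dual F (Matrix (Fin n) (Fin n) E))
    {x : Matrix (Fin n) (Fin n) E}
    (hx : x ∈ patAlg E S)
    (hx1 : ∀ y ∈ patHAlg E S, lam (y * x) = 0)
    (hx2 : ∀ y ∈ patHAlg E S, lam (x * dag y) = 0)
    {i : ℕ} (hi : 2 ≤ i) : lam (x ^ i) = 0 := by
  have h1 : 1 ≤ i - 1 := by omega
  obtain ⟨hp, hp1, hp2⟩ := glam_pow hS1 hS2 hdag lam hx hx1 hx2 (i - 1) h1
  have hsplit : x ^ i = x * x ^ (i - 1) := by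
    rw [← pow_succ']
    congr 1
    omega
  rw [hsplit]
  exact key_vanish hS1 hS2 hdag lam hx hx2 hp hp1

/-- For any Springer morphism `f` and `x ∈ 𝔤_λ`, `λ(f(1+x)) = λ(x)`. -/
lemma lam_springer (hS1 : ∀ p ∈ S, p.1 < p.2)
    (hS2 : ∀ i j k : Fin n, (i, j) ∈ S → (j, k) ∈ S → (i, k) ∈ S)
    (hdag : IsPatternAntiInvolution F E S dag)
    (lam : Module.Dual F (Matrix (Fin n) (Fin n) E))
    {f : Matrix (Fin n) (Fin n) E → Matrix (Fin n) (Fin n) E}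
    (hf : IsSpringerMorphism F E S dag f)
    {x : Matrix (Fin n) (Fin n) E}
    (hx : x ∈ patAlg E S)
    (hx1 : ∀ y ∈ patHAlg E S, lam (y * x) = 0)
    (hx2 : ∀ y ∈ patHAlg E S, lam (x * dag y) = 0) :
    lam (f (1 + x)) = lam x := by
  classical
  obtain ⟨hbij, -, N, a, ha1, hform⟩ := hf
  rw [hform x hx, map_sum]
  have hterm : ∀ i ∈ Finset.Ico 1 N,
      lam (algebraMap F E (a i) • x ^ i) = a i • lam (x ^ i) := by
    intro i _
    rw [algebraMap_smul, lam.map_smul]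
  rw [Finset.sum_congr rfl hterm]
  by_cases hN : 1 < N
  · rw [Finset.sum_eq_single_of_mem 1 (Finset.mem_Ico.mpr ⟨le_refl 1, hN⟩)]
    · rw [pow_one, ha1, one_smul]
    · intro i hi hne
      have h2 : 2 ≤ i := by
        have := (Finset.mem_Ico.mp hi).1
        omega
      rw [lam_pow_eq_zero hS1 hS2 hdag lam hx hx1 hx2 h2, smul_zero]
  · have hempty : Finset.Ico 1 N = ∅ := by
      rw [Finset.Ico_eq_empty_iff]
      omega
    rw [hempty, Finset.sum_empty]
    have hx0 : x = 0 := by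
      obtain ⟨g, hg, hfg⟩ := hbij.2.2 hx
      obtain ⟨y, hy, rfl⟩ := hg
      rw [hform y hy, hempty, Finset.sum_empty] at hfg
      exact hfg.symm
    rw [hx0, map_zero]

end MainAux

/-- With `G = 1 + 𝔤` a pattern subgroup, `†` an anti-involution as above,
`𝔥 = {x ∈ 𝔤 | x_ij = 0 if j ≤ n/2}`, and for `λ ∈ 𝔤*` the algebra subgroup
`G_λ = 1 + 𝔤_λ` where `𝔤_λ = {x ∈ 𝔤 | λ(yx) = 0 ∀ y ∈ 𝔥, λ(xy) = 0 ∀ y ∈ 𝔥†}`: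
(a) `G_λ` is closed under multiplication and `g ↦ θ(λ(f(g)))` is a group homomorphism
`G_λ → ℂ^×` (a linear character of `G_λ`), for any Springer morphism `f`; and
(b) this character is independent of the choice of Springer morphism. -/
theorem G_lambda_linear_character_and_independence
    (F : Type) [Field F] [Fintype F] (E : Type) [Field E] [Fintype E] [Algebra F E]
    (hodd : ringChar F ≠ 2)
    {n : ℕ} (S : Set (Fin n × Fin n))
    (hS1 : ∀ p ∈ S, p.1 < p.2)
    (hS2 : ∀ i j k : Fin n, (i, j) ∈ S → (j, k) ∈ S → (i, k) ∈ S)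
    (dag : Matrix (Fin n) (Fin n) E → Matrix (Fin n) (Fin n) E)
    (hdag : IsPatternAntiInvolution F E S dag)
    (θ : AddChar F ℂ) (hθ : ∃ a : F, θ a ≠ 1)
    (lam : Module.Dual F (Matrix (Fin n) (Fin n) E)) :
    -- (a): G_λ is closed under multiplication and g ↦ θ(λ(f g)) is multiplicative on G_λ
    (∀ f : Matrix (Fin n) (Fin n) E → Matrix (Fin n) (Fin n) E,
      IsSpringerMorphism F E S dag f →
      ∀ g ∈ {g | ∃ x ∈ patAlg E S, g = 1 + x ∧
          (∀ y ∈ patHAlg E S, lam (y * x) = 0) ∧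
          (∀ y ∈ patHAlg E S, lam (x * dag y) = 0)},
      ∀ h ∈ {g | ∃ x ∈ patAlg E S, g = 1 + x ∧
          (∀ y ∈ patHAlg E S, lam (y * x) = 0) ∧
          (∀ y ∈ patHAlg E S, lam (x * dag y) = 0)},
        g * h ∈ {g | ∃ x ∈ patAlg E S, g = 1 + x ∧
          (∀ y ∈ patHAlg E S, lam (y * x) = 0) ∧
          (∀ y ∈ patHAlg E S, lam (x * dag y) = 0)} ∧
        θ (lam (f (g * h))) = θ (lam (f g)) * θ (lam (f h))) ∧
    -- (b): independence of the Springer morphism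
    (∀ f f' : Matrix (Fin n) (Fin n) E → Matrix (Fin n) (Fin n) E,
      IsSpringerMorphism F E S dag f → IsSpringerMorphism F E S dag f' →
      ∀ g ∈ {g | ∃ x ∈ patAlg E S, g = 1 + x ∧
          (∀ y ∈ patHAlg E S, lam (y * x) = 0) ∧
          (∀ y ∈ patHAlg E S, lam (x * dag y) = 0)},
        θ (lam (f g)) = θ (lam (f' g))) := by
  constructor
  · intro f hf g hg h hh
    obtain ⟨x, hx, rfl, hx1, hx2⟩ := hg
    obtain ⟨z, hz, rfl, hz1, hz2⟩ := hh
    obtain ⟨hxzAlg, hxz1, hxz2⟩ := glam_mul hS1 hS2 hdag lam hx hx2 hz hz1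
    have hw : (1 + x) * (1 + z) = 1 + (x + z + x * z) := by noncomm_ring
    have hwAlg : x + z + x * z ∈ patAlg E S :=
      patAlg_add (patAlg_add hx hz) hxzAlg
    have hw1 : ∀ y ∈ patHAlg E S, lam (y * (x + z + x * z)) = 0 := by
      intro y hy
      rw [mul_add, mul_add, map_add, map_add, hx1 y hy, hz1 y hy, hxz1 y hy]
      ring
    have hw2 : ∀ y ∈ patHAlg E S, lam ((x + z + x * z) * dag y) = 0 := by
      intro y hy
      rw [add_mul, add_mul, map_add, map_add, hx2 y hy, hz2 y hy, hxz2 y hy]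
      ring
    refine ⟨⟨x + z + x * z, hwAlg, hw, hw1, hw2⟩, ?_⟩
    rw [hw, lam_springer hS1 hS2 hdag lam hf hwAlg hw1 hw2,
      lam_springer hS1 hS2 hdag lam hf hx hx1 hx2,
      lam_springer hS1 hS2 hdag lam hf hz hz1 hz2]
    have hxz0 : lam (x * z) = 0 := key_vanish hS1 hS2 hdag lam hx hx2 hz hz1
    rw [lam.map_add, lam.map_add, hxz0, add_zero, AddChar.map_add_eq_mul]
  · intro f f' hf hf' g hg
    obtain ⟨x, hx, rfl, hx1, hx2⟩ := hg
    rw [lam_springer hS1 hS2 hdag lam hf hx hx1 hx2,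
      lam_springer hS1 hS2 hdag lam hf' hx hx1 hx2]
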